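/- For every t ∈ ℂ with Re(t) > 0 and every real γ > 0, the integral below converges and χ(γt) = (μ³·t²/(1 + μ²)) · ∫₀^∞ μ^{−4·⟨log_{μ⁴}(s/γ)⟩} · s · exp((μ − 1/μ)·t·s) ds. -/

import Mathlib

open Complex Set Filter MeasureTheory

/-- `μ = (R - √(R²-4))/2`. -/
noncomputable def mu (R : ℝ) : ℝ := (R - Real.sqrt (R ^ 2 - 4)) / 2

/-- The Möbius transformation `λ(z) = (z - μ)/(μz - 1)`. -/
noncomputable def lam (R : ℝ) (z : ℂ) : ℂ := (z - (mu R : ℂ)) / ((mu R : ℂ) * z - 1)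

/-- The shifted Zhukovsky-type map `ψ(w) = Rw - 1 + 1/(Rw - 1)`. -/
noncomputable def psi (R : ℝ) (w : ℂ) : ℂ := (R : ℂ) * w - 1 + ((R : ℂ) * w - 1)⁻¹

/-- `χ(t) = t ∑_{k ∈ ℤ} μ^{4k} exp((μ - 1/μ) μ^{4k} t)`. -/
noncomputable def chi (R : ℝ) (t : ℂ) : ℂ :=
  t * ∑' k : ℤ, (mu R : ℂ) ^ (4 * k) *
    Complex.exp (((mu R : ℂ) - (mu R : ℂ)⁻¹) * (mu R : ℂ) ^ (4 * k) * t)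

/-- The region `D = {t : |t - 1/R| < 1/R, Re t > Rμ²/2}`. -/
def Dset (R : ℝ) : Set ℂ :=
  {t | ‖t - 1 / (R : ℂ)‖ < 1 / R ∧ R * (mu R) ^ 2 / 2 < t.re}

/-- The region `𝔇 = {w : |w - R/(R²-1)| > 1/(R²-1), |w| < 1}`. -/
def frakD (R : ℝ) : Set ℂ :=
  {w | 1 / (R ^ 2 - 1) < ‖w - (R : ℂ) / (((R : ℝ) ^ 2 - 1 : ℝ) : ℂ)‖ ∧
    ‖w‖ < 1}

/-- The orthogonality domain `G₁ = ψ(𝔇)`. -/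
noncomputable def G1 (R : ℝ) : Set ℂ := psi R '' frakD R

/-- `p` is the sequence of Carleman (Bergman) orthonormal polynomials of `G₁`:
`p n` has degree `n`, real positive leading coefficient, and
`(1/π) ∫_{G₁} pₙ conj(pₘ) dA = δ_{n,m}`. -/
def IsCarleman (R : ℝ) (p : ℕ → Polynomial ℂ) : Prop :=
  (∀ n, (p n).natDegree = n) ∧
  (∀ n, 0 < (p n).leadingCoeff.re ∧ (p n).leadingCoeff.im = 0) ∧
  (∀ n m, ∫ z in G1 R, (p n).eval z * (starRingEnd ℂ) ((p m).eval z) =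
      if n = m then (Real.pi : ℂ) else 0)

/-- The limit functions `f_q` of Theorem 1.1. -/
noncomputable def fq (R q : ℝ) (t : ℂ) : ℂ :=
  (1 - (mu R : ℂ) * t) ^ 2 * (1 - (mu R : ℂ) ^ 3 / t) ^ 2 / ((1 - (mu R : ℂ) ^ 4) * R) *
    ((chi R ((((mu R) ^ (4 * q) : ℝ) : ℂ) * t) -
        chi R ((((mu R) ^ (4 * q + 2) : ℝ) : ℂ) / t)) /
      (t - (mu R : ℂ) ^ 2 / t))

/-- `Gₙ(t) = μ^{-n} λ(t)ⁿ λ'(t)`. -/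
noncomputable def Gfun (R : ℝ) (n : ℕ) (t : ℂ) : ℂ :=
  ((mu R : ℂ) ^ n)⁻¹ * (lam R t) ^ n * deriv (lam R) t

/-- The weight `μ^{-4⟨log_{μ⁴}(s/γ)⟩}`. -/
noncomputable def wgt (R γ s : ℝ) : ℝ :=
  mu R ^ (-(4 * Int.fract (Real.logb (mu R ^ 4) (s / γ))))

/-- The integrand `μ^{-4⟨log_{μ⁴}(s/γ)⟩} · s · e^{(μ - 1/μ)ts}`. -/
noncomputable def integrand14 (R γ : ℝ) (t : ℂ) (s : ℝ) : ℂ :=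
  (wgt R γ s : ℂ) * (s : ℂ) * Complex.exp (((mu R - (mu R)⁻¹ : ℝ) : ℂ) * t * (s : ℂ))

lemma mu_pos {R : ℝ} (hR : 2 < R) : 0 < mu R := by
  have h0 : (0:ℝ) ≤ R ^ 2 - 4 := by nlinarith
  have h1 : Real.sqrt (R ^ 2 - 4) ^ 2 = R ^ 2 - 4 := Real.sq_sqrt h0
  have h2 : 0 ≤ Real.sqrt (R ^ 2 - 4) := Real.sqrt_nonneg _
  unfold mu; nlinarith

lemma mu_lt_one {R : ℝ} (hR : 2 < R) : mu R < 1 := by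
  have h0 : (0:ℝ) ≤ R ^ 2 - 4 := by nlinarith
  have h1 : Real.sqrt (R ^ 2 - 4) ^ 2 = R ^ 2 - 4 := Real.sq_sqrt h0
  have h2 : 0 ≤ Real.sqrt (R ^ 2 - 4) := Real.sqrt_nonneg _
  unfold mu; nlinarith [sq_nonneg (Real.sqrt (R ^ 2 - 4) - (R - 2))]

lemma wgt_mul_self {R γ : ℝ} (hm0 : 0 < mu R) (hm1 : mu R < 1) (hγ : 0 < γ)
    {s : ℝ} (hs : 0 < s) :
    wgt R γ s * s = γ * (mu R ^ 4) ^ (⌊Real.logb (mu R ^ 4) (s / γ)⌋) := by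
  set m := mu R
  set b : ℝ := m ^ 4 with hb
  have hb0 : 0 < b := by positivity
  have hb1 : b < 1 := pow_lt_one₀ hm0.le hm1 (by norm_num)
  set L : ℝ := Real.logb b (s / γ) with hL
  have hbL : b ^ L = s / γ := Real.rpow_logb hb0 hb1.ne (by positivity)
  have key : m ^ (-(4 * Int.fract L)) = b ^ (⌊L⌋ : ℝ) * (γ / s) := by
    rw [Int.fract]
    have e1 : (-(4 * (L - ⌊L⌋)) : ℝ) = 4 * (⌊L⌋:ℝ) + 4 * (-L) := by ring
    have h4 : (4:ℝ) = ((4:ℕ):ℝ) := by norm_num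
    rw [e1, Real.rpow_add hm0, Real.rpow_mul hm0.le, Real.rpow_mul hm0.le,
      h4, Real.rpow_natCast m 4]
    have : (b:ℝ) ^ (-L) = γ / s := by
      rw [Real.rpow_neg hb0.le, hbL, inv_div]
    rw [this]
  have : wgt R γ s = b ^ (⌊L⌋ : ℝ) * (γ / s) := key
  rw [this, Real.rpow_intCast]
  field_simp

lemma aux_exp_bound {d x : ℝ} (hd : 0 < d) (hx : 0 < x) :
    x * Real.exp (-(d * x)) ≤ 4 / (d ^ 2 * x) := by
  have h1 := Real.add_one_le_exp (d * x / 2)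
  have h2 : Real.exp (d * x / 2) ^ 2 = Real.exp (d * x) := by
    rw [sq, ← Real.exp_add]; ring_nf
  have hdx : 0 ≤ d * x := by positivity
  have h3 : (d * x) ^ 2 / 4 ≤ Real.exp (d * x) := by nlinarith [Real.exp_pos (d * x / 2)]
  have hE : 0 < Real.exp (d * x) := Real.exp_pos _
  rw [Real.exp_neg, ← div_eq_mul_inv, div_le_div_iff₀ hE (by positivity)]
  nlinarith [h3]

lemma mem_Ioc_iff_floor {b γ : ℝ} (hb0 : 0 < b) (hb1 : b < 1) (hγ : 0 < γ)
    {s : ℝ} (hs : 0 < s) (k : ℤ) :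
    s ∈ Set.Ioc (γ * b ^ (k + 1)) (γ * b ^ k) ↔ ⌊Real.logb b (s / γ)⌋ = k := by
  set L := Real.logb b (s / γ) with hLdef
  have hbL : b ^ L = s / γ := Real.rpow_logb hb0 hb1.ne (by positivity)
  have hz : ∀ j : ℤ, (b : ℝ) ^ j = b ^ (j : ℝ) := fun j => (Real.rpow_intCast b j).symm
  constructor
  · rintro ⟨h1, h2⟩
    have e1 : b ^ (((k : ℝ) + 1)) < b ^ L := by
      rw [hbL]
      have : b ^ ((k + 1 : ℤ) : ℝ) < s / γ := by
        rw [← hz]; rw [lt_div_iff₀ hγ]; linarith [h1]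
      convert this using 2; push_cast; ring
    have e2 : b ^ L ≤ b ^ ((k : ℝ)) := by
      rw [hbL, ← hz]; rw [div_le_iff₀ hγ]; linarith [h2]
    have l1 : L < (k : ℝ) + 1 :=
      (Real.rpow_lt_rpow_left_iff_of_base_lt_one hb0 hb1).mp e1
    have l2 : (k : ℝ) ≤ L :=
      (Real.rpow_le_rpow_left_iff_of_base_lt_one hb0 hb1).mp e2
    exact Int.floor_eq_iff.mpr ⟨l2, l1⟩
  · intro hk
    have hfl := Int.floor_eq_iff.mp hk
    constructor
    · have e1 : b ^ (((k + 1 : ℤ)) : ℝ) < b ^ L :=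
        (Real.rpow_lt_rpow_left_iff_of_base_lt_one hb0 hb1).mpr
          (by push_cast; exact hfl.2)
      rw [hbL, ← hz, lt_div_iff₀ hγ] at e1
      linarith [e1]
    · have e2 : b ^ L ≤ b ^ ((k : ℝ)) :=
        (Real.rpow_le_rpow_left_iff_of_base_lt_one hb0 hb1).mpr hfl.1
      rw [hbL, ← hz, div_le_iff₀ hγ] at e2
      linarith [e2]

lemma bound_wgt {b γ : ℝ} (hb0 : 0 < b) (hb1 : b < 1) (hγ : 0 < γ)
    {s : ℝ} (hs : 0 < s) :
    γ * b ^ (⌊Real.logb b (s / γ)⌋) ≤ b⁻¹ * s := by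
  set L := Real.logb b (s / γ) with hLdef
  have hbL : b ^ L = s / γ := Real.rpow_logb hb0 hb1.ne (by positivity)
  have h1 : b ^ ((⌊L⌋ : ℝ)) ≤ b ^ (L - 1) :=
    Real.rpow_le_rpow_of_exponent_ge hb0 hb1.le (by linarith [Int.sub_one_lt_floor L])
  have h2 : b ^ (L - 1) = (s / γ) * b⁻¹ := by
    rw [Real.rpow_sub hb0, hbL, Real.rpow_one, div_eq_mul_inv]
  have h3 : (b : ℝ) ^ (⌊L⌋ : ℤ) = b ^ ((⌊L⌋ : ℝ)) := (Real.rpow_intCast b _).symm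
  rw [h3]
  calc γ * b ^ ((⌊L⌋:ℝ)) ≤ γ * ((s / γ) * b⁻¹) := by
        rw [← h2]; exact mul_le_mul_of_nonneg_left (h2 ▸ h1) hγ.le
    _ = b⁻¹ * s := by field_simp

lemma summable_aux {b γ d : ℝ} (hb0 : 0 < b) (hb1 : b < 1) (hγ : 0 < γ) (hd : 0 < d) :
    Summable (fun k : ℤ => (γ * b ^ k) * Real.exp (-(d * (γ * b ^ k)))) := by
  have hpos : ∀ k : ℤ, 0 < γ * b ^ k := fun k => by positivity
  apply Summable.of_nat_of_neg
  · apply Summable.of_nonneg_of_le (fun n => by positivity) (fun n => ?_)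
      ((summable_geometric_of_lt_one hb0.le hb1).mul_left γ)
    have he : Real.exp (-(d * (γ * b ^ (n : ℤ)))) ≤ 1 :=
      Real.exp_le_one_iff.mpr (by nlinarith [hpos (n : ℤ)])
    calc (γ * b ^ (n : ℤ)) * Real.exp (-(d * (γ * b ^ (n : ℤ))))
        ≤ (γ * b ^ (n : ℤ)) * 1 := mul_le_mul_of_nonneg_left he (hpos _).le
      _ = γ * b ^ n := by rw [mul_one, zpow_natCast]
  · apply Summable.of_nonneg_of_le (fun n => by positivity) (fun n => ?_)
      ((summable_geometric_of_lt_one hb0.le hb1).mul_left (4 / (d ^ 2 * γ)))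
    have hx := hpos (-(n : ℤ))
    calc (γ * b ^ (-(n : ℤ))) * Real.exp (-(d * (γ * b ^ (-(n : ℤ)))))
        ≤ 4 / (d ^ 2 * (γ * b ^ (-(n : ℤ)))) := aux_exp_bound hd hx
      _ = 4 / (d ^ 2 * γ) * b ^ n := by
          rw [zpow_neg, zpow_natCast]
          have hbn : (0:ℝ) < b ^ n := by positivity
          field_simp

set_option maxHeartbeats 2000000 in
/-- Integral representation (3.5) of `χ`: for `Re t > 0` and `γ > 0`, the integral
converges and `χ(γt) = (μ³t²/(1+μ²)) ∫₀^∞ μ^{-4⟨log_{μ⁴}(s/γ)⟩} s e^{(μ-1/μ)ts} ds`. -/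
theorem stmt_14 (R : ℝ) (hR : 2 < R) (t : ℂ) (ht : 0 < t.re) (γ : ℝ) (hγ : 0 < γ) :
    MeasureTheory.IntegrableOn (integrand14 R γ t) (Set.Ioi 0) ∧
    chi R ((γ : ℂ) * t) =
      (mu R : ℂ) ^ 3 * t ^ 2 / (1 + (mu R : ℂ) ^ 2) *
        ∫ s in Set.Ioi (0 : ℝ), integrand14 R γ t s := by
  have hm0 : 0 < mu R := mu_pos hR
  have hm1 : mu R < 1 := mu_lt_one hR
  set m : ℝ := mu R with hmdef
  set b : ℝ := m ^ 4 with hbdef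
  have hb0 : 0 < b := by positivity
  have hb1 : b < 1 := pow_lt_one₀ hm0.le hm1 (by norm_num)
  set a : ℝ := m - m⁻¹ with hadef
  have ha : a < 0 := by
    have h := mul_inv_cancel₀ hm0.ne'
    rw [hadef]; nlinarith
  set c : ℂ := ((a : ℝ) : ℂ) * t with hcdef
  have hcre : c.re = a * t.re := by
    rw [hcdef]; simp [Complex.mul_re]
  have hcre_neg : c.re < 0 := by rw [hcre]; exact mul_neg_of_neg_of_pos ha ht
  have hc0 : c ≠ 0 := by intro h; rw [h] at hcre_neg; simp at hcre_neg
  set d : ℝ := -c.re with hddef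
  have hd : 0 < d := by rw [hddef]; linarith
  -- measurability
  have hwm : Measurable (wgt R γ) := by
    have hrw : wgt R γ = fun s =>
        Real.exp (Real.log m * (-(4 * Int.fract (Real.logb (m ^ 4) (s / γ))))) :=
      funext fun s => Real.rpow_def_of_pos hm0 _
    rw [hrw]
    apply Real.measurable_exp.comp
    apply Measurable.const_mul
    apply Measurable.neg
    apply Measurable.const_mul
    apply measurable_fract.comp
    simp only [Real.logb]
    exact (Real.measurable_log.comp (measurable_id.div_const γ)).div_const _
  have hmeas : Measurable (integrand14 R γ t) := by
    unfold integrand14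
    exact ((Complex.measurable_ofReal.comp hwm).mul Complex.measurable_ofReal).mul
      (Complex.measurable_exp.comp (measurable_const.mul Complex.measurable_ofReal))
  -- pointwise rewriting
  set F : ℝ → ℂ := fun s =>
    ((γ * b ^ (⌊Real.logb b (s / γ)⌋) : ℝ) : ℂ) * Complex.exp (c * (s : ℂ)) with hFdef
  have hEq : EqOn (integrand14 R γ t) F (Ioi 0) := by
    intro s hs
    have hs0 : 0 < s := hs
    show (wgt R γ s : ℂ) * (s : ℂ) * Complex.exp (((m - m⁻¹ : ℝ) : ℂ) * t * (s : ℂ)) = F s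
    rw [hFdef]
    have h1 : ((wgt R γ s : ℂ)) * (s : ℂ) = ((wgt R γ s * s : ℝ) : ℂ) := by push_cast; ring
    rw [h1, wgt_mul_self hm0 hm1 hγ hs0]
  -- norm identity
  have hnorm : ∀ (r s : ℝ), ‖((r : ℝ) : ℂ) * Complex.exp (c * (s : ℂ))‖
      = |r| * Real.exp (c.re * s) := by
    intro r s
    rw [norm_mul, Complex.norm_real, Real.norm_eq_abs,
      Complex.norm_exp]
    congr 2
    simp [Complex.mul_re]
  -- domination
  have hgint : IntegrableOn (fun s : ℝ => b⁻¹ * (s * Real.exp (c.re * s))) (Ioi 0) := by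
    have h1 : IntegrableOn (fun x : ℝ => Real.exp (-x) * x ^ ((2:ℝ) - 1)) (Ioi 0) :=
      Real.GammaIntegral_convergent (by norm_num)
    have h1' : IntegrableOn (fun x : ℝ => Real.exp (-x) * x) (Ioi 0) := by
      refine h1.congr_fun (fun x hx => ?_) measurableSet_Ioi
      norm_num
    have h2 : IntegrableOn (fun x : ℝ => Real.exp (-(d * x)) * (d * x)) (Ioi 0) := by
      have h3 := (integrableOn_Ioi_comp_mul_left_iff
        (fun x : ℝ => Real.exp (-x) * x) 0 hd).mpr (by simpa using h1')
      simpa using h3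
    have hfe : (fun s : ℝ => b⁻¹ * (s * Real.exp (c.re * s)))
        = fun s : ℝ => (b⁻¹ * d⁻¹) * (Real.exp (-(d * s)) * (d * s)) := by
      funext s
      have hcd : c.re = -d := by rw [hddef]; ring
      rw [hcd]; field_simp
    rw [hfe]
    exact h2.const_mul _
  have hInt : IntegrableOn (integrand14 R γ t) (Ioi 0) := by
    apply Integrable.mono' hgint hmeas.aestronglyMeasurable
    rw [ae_restrict_iff' measurableSet_Ioi]
    filter_upwards with s hs
    have hs0 : 0 < s := hs
    rw [hEq hs, hFdef]
    rw [hnorm]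
    have hple : γ * b ^ (⌊Real.logb b (s / γ)⌋) ≤ b⁻¹ * s := bound_wgt hb0 hb1 hγ hs0
    have hppos : 0 < γ * b ^ (⌊Real.logb b (s / γ)⌋) := by positivity
    rw [abs_of_pos hppos]
    have hexp : 0 < Real.exp (c.re * s) := Real.exp_pos _
    calc γ * b ^ (⌊Real.logb b (s / γ)⌋) * Real.exp (c.re * s)
        ≤ (b⁻¹ * s) * Real.exp (c.re * s) := by
          exact mul_le_mul_of_nonneg_right hple hexp.le
      _ = b⁻¹ * (s * Real.exp (c.re * s)) := by ring
  refine ⟨hInt, ?_⟩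
  -- the partition of (0, ∞)
  set S : ℤ → Set ℝ := fun k => Ioc (γ * b ^ (k + 1)) (γ * b ^ k) with hSdef
  have hUnion : (⋃ k : ℤ, S k) = Ioi (0 : ℝ) := by
    ext x
    simp only [hSdef, mem_iUnion, mem_Ioi]
    constructor
    · rintro ⟨k, hk⟩
      have h0 : 0 < γ * b ^ (k + 1) := by positivity
      linarith [hk.1]
    · intro hx
      exact ⟨⌊Real.logb b (x / γ)⌋, (mem_Ioc_iff_floor hb0 hb1 hγ hx _).mpr rfl⟩
  have hdisj : Pairwise (Function.onFun Disjoint S) := by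
    intro j k hjk
    rw [Function.onFun, Set.disjoint_left]
    intro x hxj hxk
    have h0 : 0 < γ * b ^ (j + 1) := by positivity
    have hx0 : 0 < x := lt_of_lt_of_le h0 hxj.1.le
    exact hjk (((mem_Ioc_iff_floor hb0 hb1 hγ hx0 j).mp hxj).symm.trans
      ((mem_Ioc_iff_floor hb0 hb1 hγ hx0 k).mp hxk))
  have hFint : IntegrableOn F (Ioi 0) := hInt.congr_fun hEq measurableSet_Ioi
  -- the sequence
  set f : ℤ → ℂ := fun k =>
    ((γ * b ^ k : ℝ) : ℂ) * Complex.exp (c * ((γ * b ^ k : ℝ) : ℂ)) with hfdef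
  have hfs : Summable f := by
    apply Summable.of_norm
    have he : (fun k : ℤ => ‖f k‖)
        = fun k : ℤ => (γ * b ^ k) * Real.exp (-(d * (γ * b ^ k))) := by
      funext k
      rw [hfdef]
      rw [hnorm, abs_of_pos (by positivity : (0:ℝ) < γ * b ^ k)]
      congr 2
      rw [hddef]; ring
    rw [he]
    exact summable_aux hb0 hb1 hγ hd
  have hshift : Summable (fun k : ℤ => f (k + 1)) :=
    (Equiv.addRight (1 : ℤ)).summable_iff.mpr hfs
  have hTshift : ∑' k : ℤ, f (k + 1) = ∑' k : ℤ, f k := (Equiv.addRight (1 : ℤ)).tsum_eq f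
  -- integral over each piece
  have hIoc : ∀ k : ℤ, ∫ x in S k, F x = (1 / c) * (f k - ((b : ℝ) : ℂ)⁻¹ * f (k + 1)) := by
    intro k
    have hmono : (b : ℝ) ^ (k + 1) ≤ b ^ k := by
      rw [← Real.rpow_intCast b (k + 1), ← Real.rpow_intCast b k]
      exact Real.rpow_le_rpow_of_exponent_ge hb0 hb1.le (by push_cast; linarith)
    have hlu : γ * b ^ (k + 1) ≤ γ * b ^ k := mul_le_mul_of_nonneg_left hmono hγ.le
    have hcongr : ∀ x ∈ S k, F x = ((γ * b ^ k : ℝ) : ℂ) * Complex.exp (c * (x : ℂ)) := by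
      intro x hx
      have h0 : 0 < γ * b ^ (k + 1) := by positivity
      have hx0 : 0 < x := lt_of_lt_of_le h0 hx.1.le
      rw [hFdef]
      simp only []
      rw [(mem_Ioc_iff_floor hb0 hb1 hγ hx0 k).mp hx]
    rw [setIntegral_congr_fun measurableSet_Ioc hcongr, MeasureTheory.integral_const_mul,
      ← intervalIntegral.integral_of_le hlu, integral_exp_mul_complex hc0]
    have hb1k : γ * b ^ (k + 1) = (γ * b ^ k) * b := by
      rw [zpow_add_one₀ hb0.ne']; ring
    rw [hfdef]
    simp only []
    rw [hb1k]
    have hbC0 : ((b : ℝ) : ℂ) ≠ 0 := Complex.ofReal_ne_zero.mpr hb0.ne'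
    push_cast
    field_simp
  -- evaluate the full integral
  have hIntEq : ∫ s in Ioi (0 : ℝ), integrand14 R γ t s
      = (1 / c) * (1 - ((b : ℝ) : ℂ)⁻¹) * ∑' k : ℤ, f k := by
    rw [setIntegral_congr_fun measurableSet_Ioi hEq, ← hUnion,
      integral_iUnion (fun k => measurableSet_Ioc) hdisj (hUnion ▸ hFint)]
    rw [tsum_congr hIoc]
    rw [tsum_mul_left, Summable.tsum_sub hfs (hshift.mul_left _), tsum_mul_left, hTshift]
    ring
  -- chi in terms of f
  have haC : ((a : ℝ) : ℂ) = (m : ℂ) - (m : ℂ)⁻¹ := by rw [hadef]; push_cast; rfl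
  have hbC : ((b : ℝ) : ℂ) = (m : ℂ) ^ 4 := by rw [hbdef]; push_cast; rfl
  have hM0 : (m : ℂ) ≠ 0 := Complex.ofReal_ne_zero.mpr hm0.ne'
  have hγ0 : ((γ : ℝ) : ℂ) ≠ 0 := Complex.ofReal_ne_zero.mpr hγ.ne'
  have hchi : chi R ((γ : ℂ) * t) = t * ∑' k : ℤ, f k := by
    unfold chi
    rw [← hmdef]
    have hterm : ∀ k : ℤ, (m : ℂ) ^ (4 * k) *
        Complex.exp (((m : ℂ) - (m : ℂ)⁻¹) * (m : ℂ) ^ (4 * k) * ((γ : ℂ) * t))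
        = ((γ : ℝ) : ℂ)⁻¹ * f k := by
      intro k
      have hzk : (m : ℂ) ^ (4 * k) = ((b ^ k : ℝ) : ℂ) := by
        rw [Complex.ofReal_zpow, hbC, zpow_mul (m : ℂ) 4 k, zpow_ofNat]
      rw [hzk, hfdef]
      simp only []
      rw [← haC, hcdef]
      have hexp : ((a : ℝ) : ℂ) * ((b ^ k : ℝ) : ℂ) * ((γ : ℂ) * t)
          = ((a : ℝ) : ℂ) * t * ((γ * b ^ k : ℝ) : ℂ) := by push_cast; ring
      rw [hexp]
      push_cast
      field_simp
    rw [tsum_congr hterm, tsum_mul_left]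
    field_simp
  rw [hchi, hIntEq]
  have ht0 : t ≠ 0 := by intro h; rw [h] at ht; simp at ht
  have h1m : (1 : ℂ) + (m : ℂ) ^ 2 ≠ 0 := by
    have hc : ((1 + m ^ 2 : ℝ) : ℂ) = 1 + (m : ℂ) ^ 2 := by push_cast; ring
    rw [← hc]
    exact Complex.ofReal_ne_zero.mpr (by positivity)
  have ha0 : ((a : ℝ) : ℂ) ≠ 0 := Complex.ofReal_ne_zero.mpr ha.ne
  have hcoef : (m : ℂ) ^ 3 * t ^ 2 / (1 + (m : ℂ) ^ 2)
      * ((1 / c) * (1 - ((b : ℝ) : ℂ)⁻¹)) = t := by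
    have hamC : ((m : ℂ) - ((m : ℂ))⁻¹) ≠ 0 := haC ▸ ha0
    have hbne : ((m : ℂ) ^ 4 - 1) ≠ 0 :=
      sub_ne_zero.mpr (by rw [← hbC]; exact_mod_cast hb1.ne)
    rw [hcdef, haC, hbC]
    field_simp
    have hE : (-(↑m ^ 4 * t) + ↑m ^ 8 * t : ℂ) ≠ 0 := by
      have he2 : (-(↑m ^ 4 * t) + ↑m ^ 8 * t : ℂ) = (↑m ^ 4 * ((↑m : ℂ) ^ 4 - 1)) * t := by
        ring
      rw [he2]
      exact mul_ne_zero (mul_ne_zero (pow_ne_zero _ hM0) hbne) ht0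
    have h3 := mul_inv_cancel₀ hE
    have hm2 : (m : ℂ) ^ 2 - 1 ≠ 0 := by
      intro h; apply hbne; linear_combination ((m : ℂ) ^ 2 + 1) * h
    rw [div_eq_iff hm2]; ring
  calc t * ∑' k : ℤ, f k
      = ((m : ℂ) ^ 3 * t ^ 2 / (1 + (m : ℂ) ^ 2) * ((1 / c) * (1 - ((b : ℝ) : ℂ)⁻¹)))
        * ∑' k : ℤ, f k := by rw [hcoef]
    _ = (m : ℂ) ^ 3 * t ^ 2 / (1 + (m : ℂ) ^ 2)
        * ((1 / c) * (1 - ((b : ℝ) : ℂ)⁻¹) * ∑' k : ℤ, f k) := by ring
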